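/- Suppose positive reals x, y, z and s₀ < s₁ < s₂ < s₃ and t, t' (all positive) satisfy x = ((s₁t' + 1)(s₀t + 1))/((s₀t' + 1)(s₁t + 1)), y = ((s₂t' + 1)(s₁t + 1))/((s₁t' + 1)(s₂t + 1)), and z = ((s₃t' + 1)(s₂t + 1))/((s₂t' + 1)(s₃t + 1)). Then (x-1)(z-1)·G(x,y,z) = 0, where G(x,y,z) = (xy²z + 1)(s₀-s₁)(s₂-s₃) + (xyz + y)(s₂-s₀)(s₁-s₃) + (yz + xy)(s₀-s₃)(s₁-s₂). -/

import Mathlib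

set_option maxHeartbeats 1000000 in
theorem stmt12 (s₀ s₁ s₂ s₃ t t' x y z : ℝ)
    (hs₀ : 0 < s₀) (h01 : s₀ < s₁) (h12 : s₁ < s₂) (h23 : s₂ < s₃)
    (ht : 0 < t) (ht' : 0 < t') (hx : 0 < x) (hy : 0 < y) (hz : 0 < z)
    (hxe : x = ((s₁ * t' + 1) * (s₀ * t + 1)) / ((s₀ * t' + 1) * (s₁ * t + 1)))
    (hye : y = ((s₂ * t' + 1) * (s₁ * t + 1)) / ((s₁ * t' + 1) * (s₂ * t + 1)))
    (hze : z = ((s₃ * t' + 1) * (s₂ * t + 1)) / ((s₂ * t' + 1) * (s₃ * t + 1))) :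
    (x - 1) * (z - 1) *
      ((x * y ^ 2 * z + 1) * (s₀ - s₁) * (s₂ - s₃) +
        (x * y * z + y) * (s₂ - s₀) * (s₁ - s₃) +
        (y * z + x * y) * (s₀ - s₃) * (s₁ - s₂)) = 0 := by
  have h1 : (0:ℝ) < s₁ := lt_trans hs₀ h01
  have h2 : (0:ℝ) < s₂ := lt_trans h1 h12
  have h3 : (0:ℝ) < s₃ := lt_trans h2 h23
  have a0 : s₀ * t + 1 ≠ 0 := by positivity
  have a1 : s₁ * t + 1 ≠ 0 := by positivity
  have a2 : s₂ * t + 1 ≠ 0 := by positivity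
  have a3 : s₃ * t + 1 ≠ 0 := by positivity
  have b0 : s₀ * t' + 1 ≠ 0 := by positivity
  have b1 : s₁ * t' + 1 ≠ 0 := by positivity
  have b2 : s₂ * t' + 1 ≠ 0 := by positivity
  have b3 : s₃ * t' + 1 ≠ 0 := by positivity
  have e1 : x * y ^ 2 * z =
      ((s₀ * t + 1) * (s₁ * t + 1) * (s₂ * t' + 1) * (s₃ * t' + 1)) /
        ((s₀ * t' + 1) * (s₁ * t' + 1) * (s₂ * t + 1) * (s₃ * t + 1)) := by
    rw [hxe, hye, hze]; field_simp
  have e2 : x * y * z =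
      ((s₀ * t + 1) * (s₃ * t' + 1)) / ((s₀ * t' + 1) * (s₃ * t + 1)) := by
    rw [hxe, hye, hze]; field_simp
  have e3 : y * z =
      ((s₁ * t + 1) * (s₃ * t' + 1)) / ((s₁ * t' + 1) * (s₃ * t + 1)) := by
    rw [hye, hze]; field_simp
  have e4 : x * y =
      ((s₀ * t + 1) * (s₂ * t' + 1)) / ((s₀ * t' + 1) * (s₂ * t + 1)) := by
    rw [hxe, hye]; field_simp
  have key : (x * y ^ 2 * z + 1) * (s₀ - s₁) * (s₂ - s₃) +
        (x * y * z + y) * (s₂ - s₀) * (s₁ - s₃) +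
        (y * z + x * y) * (s₀ - s₃) * (s₁ - s₂) = 0 := by
    rw [e1, e2, e3, e4, hye]
    field_simp
    ring
  rw [key, mul_zero]
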